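/- Let J be a poset and let I := D(J) be the lattice of downsets of J (a closed set system, with least element ∅ and greatest element J). Regard J as the vertex set of a graph in which two elements are adjacent iff they are comparable; a subset is called connected iff the induced subgraph on it is connected. For downsets z ⊆ q ⊆ p ⊆ b, let Z(z,q,p,b) be the union of the connected components of p∖z that intersect p∖q, and B(z,q,p,b) the union of the connected components of b∖q that intersect p∖q. Let E be an excisive exact couple system over I. If z ⊆ q ⊆ p ⊆ b and z' ⊆ q' ⊆ p' ⊆ b' are quadruples of downsets with Z(z,q,p,b) = Z(z',q',p',b') and B(z,q,p,b) = B(z',q',p',b'), then S^{pz}_{bq} ≅ S^{p'z'}_{b'q'}. -/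

import Mathlib

open Function

universe u v

/-- An exact couple system over a bounded poset `I`: abelian groups `E^p_q` for `q ≤ p`,
functorial maps `ℓ`, boundary maps `k_{pq} : E^p_q → D_q` (where `D_p := E^p_⊥`), exact
triangles `D_q → D_p → E^p_q → D_q`, and naturality of `k`. -/
structure ExactCoupleSystem (I : Type u) [PartialOrder I] [BoundedOrder I] where
  /-- the abelian groups `E^p_q` -/
  E : ∀ p q : I, q ≤ p → AddCommGrpCat.{v}
  /-- the structure maps `ℓ : E^p_q → E^{p'}_{q'}` for `p ≤ p'`, `q ≤ q'` -/
  l : ∀ {p q p' q' : I} (h : q ≤ p) (h' : q' ≤ p'), p ≤ p' → q ≤ q' →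
      (E p q h →+ E p' q' h')
  /-- the boundary maps `k_{pq} : E^p_q → D_q` -/
  k : ∀ {p q : I} (h : q ≤ p), (E p q h →+ E q ⊥ bot_le)
  l_id : ∀ {p q : I} (h : q ≤ p), l h h le_rfl le_rfl = AddMonoidHom.id _
  l_comp : ∀ {p q p' q' p'' q'' : I} (h : q ≤ p) (h' : q' ≤ p') (h'' : q'' ≤ p'')
      (hp : p ≤ p') (hq : q ≤ q') (hp' : p' ≤ p'') (hq' : q' ≤ q''),
      (l h' h'' hp' hq').comp (l h h' hp hq) = l h h'' (hp.trans hp') (hq.trans hq')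
  exact_ij : ∀ {p q : I} (h : q ≤ p),
      (l (bot_le : (⊥ : I) ≤ q) (bot_le : (⊥ : I) ≤ p) h le_rfl).range =
        (l (bot_le : (⊥ : I) ≤ p) h le_rfl bot_le).ker
  exact_jk : ∀ {p q : I} (h : q ≤ p),
      (l (bot_le : (⊥ : I) ≤ p) h le_rfl bot_le).range = (k h).ker
  exact_ki : ∀ {p q : I} (h : q ≤ p),
      (k h).range = (l (bot_le : (⊥ : I) ≤ q) (bot_le : (⊥ : I) ≤ p) h le_rfl).ker
  k_nat : ∀ {p q p' q' : I} (h : q ≤ p) (h' : q' ≤ p') (hp : p ≤ p') (hq : q ≤ q'),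
      (l (bot_le : (⊥ : I) ≤ q) (bot_le : (⊥ : I) ≤ q') hq le_rfl).comp (k h) =
        (k h').comp (l h h' hp hq)

namespace ExactCoupleSystem

variable {I : Type u} [PartialOrder I] [BoundedOrder I] (X : ExactCoupleSystem.{u, v} I)

/-- `D_p := E^p_{−∞}`. -/
abbrev D (p : I) := X.E p ⊥ bot_le

/-- `i_{qp} : D_q → D_p`. -/
def i {q p : I} (h : q ≤ p) : X.D q →+ X.D p := X.l bot_le bot_le h le_rfl

/-- `j_{pq} : D_p → E^p_q`. -/
def j {q p : I} (h : q ≤ p) : X.D p →+ X.E p q h := X.l bot_le h le_rfl bot_le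

/-- The differential `d_{pqz} = j_{qz} ∘ k_{pq} : E^p_q → E^q_z`. -/
def dd {z q p : I} (hzq : z ≤ q) (hqp : q ≤ p) : X.E p q hqp →+ X.E q z hzq :=
  (X.j hzq).comp (X.k hqp)

/-- The S-term `S^{pz}_{bq} = ker(d_{pqz}) / im(d_{bpq})` of an exact couple system. -/
abbrev Sterm {z q p b : I} (hzq : z ≤ q) (hqp : q ≤ p) (hpb : p ≤ b) :=
  ↥(X.dd hzq hqp).ker ⧸ (X.dd hqp hpb).range.addSubgroupOf (X.dd hzq hqp).ker

/-- The class in `S^{pz}_{bq}` of an element `x ∈ ker(d_{pqz})`. -/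
def Scls {z q p b : I} (hzq : z ≤ q) (hqp : q ≤ p) (hpb : p ≤ b)
    {x : X.E p q hqp} (hx : x ∈ (X.dd hzq hqp).ker) : X.Sterm hzq hqp hpb :=
  QuotientAddGroup.mk ⟨x, hx⟩

end ExactCoupleSystem

/-- An exact couple system over a bounded lattice is excisive if all the maps
`ℓ : E^a_{a⊓b} → E^{a⊔b}_b` are isomorphisms. -/
def ExactCoupleSystem.IsExcisive {I : Type u} [Lattice I] [BoundedOrder I]
    (X : ExactCoupleSystem.{u, v} I) : Prop :=
  ∀ a b : I, Function.Bijective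
    (X.l (inf_le_left : a ⊓ b ≤ a) (le_sup_right : b ≤ a ⊔ b) le_sup_left inf_le_right)

/-- A single step of a path inside `A`: both endpoints are in `A` and they are
comparable. -/
def StepIn {V : Type*} [Preorder V] (A : Set V) (a b : V) : Prop :=
  a ∈ A ∧ b ∈ A ∧ (a ≤ b ∨ b ≤ a)

/-- `x` and `y` are joined by a path inside `A` whose consecutive points are comparable. -/
def ReachIn {V : Type*} [Preorder V] (A : Set V) : V → V → Prop :=
  Relation.ReflTransGen (StepIn A)

/-- `Z(z,q,p,b)`: the union of the connected components of `p∖z` that intersect `p∖q`. -/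
def Zset {V : Type*} [Preorder V] (z q p b : Set V) : Set V :=
  {x | x ∈ p \ z ∧ ∃ y ∈ p \ q, ReachIn (p \ z) x y}

/-- `B(z,q,p,b)`: the union of the connected components of `b∖q` that intersect `p∖q`. -/
def Bset {V : Type*} [Preorder V] (z q p b : Set V) : Set V :=
  {x | x ∈ b \ q ∧ ∃ y ∈ p \ q, ReachIn (b \ q) x y}

----------------------------------------------------------------------
-- NEW: algebraic toolkit
----------------------------------------------------------------------

namespace ExactCoupleSystem

variable {I : Type u} [PartialOrder I] [BoundedOrder I] (X : ExactCoupleSystem.{u, v} I)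

lemma l_l {p q p' q' p'' q'' : I} (h : q ≤ p) (h' : q' ≤ p') (h'' : q'' ≤ p'')
    (hp : p ≤ p') (hq : q ≤ q') (hp' : p' ≤ p'') (hq' : q' ≤ q'') (x : X.E p q h) :
    X.l h' h'' hp' hq' (X.l h h' hp hq x) = X.l h h'' (hp.trans hp') (hq.trans hq') x := by
  rw [← AddMonoidHom.comp_apply, X.l_comp]

lemma k_l {p q p' q' : I} (h : q ≤ p) (h' : q' ≤ p') (hp : p ≤ p') (hq : q ≤ q')
    (x : X.E p q h) :
    X.k h' (X.l h h' hp hq x) = X.i hq (X.k h x) := by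
  rw [← AddMonoidHom.comp_apply, ← X.k_nat h h' hp hq]; rfl

lemma k_l_left {p b b' : I} (hpb : p ≤ b) (hpb' : p ≤ b') (hbb' : b ≤ b')
    (m : X.E b p hpb) :
    X.k hpb' (X.l hpb hpb' hbb' le_rfl m) = X.k hpb m := by
  rw [← AddMonoidHom.comp_apply, ← X.k_nat hpb hpb' hbb' le_rfl, X.l_id]; rfl

lemma i_i {a b c : I} (hab : a ≤ b) (hbc : b ≤ c) (y : X.D a) :
    X.i hbc (X.i hab y) = X.i (hab.trans hbc) y :=
  X.l_l bot_le bot_le bot_le hab le_rfl hbc le_rfl y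

lemma j_i_comp {z q q' : I} (hzq : z ≤ q) (hzq' : z ≤ q') (hqq' : q ≤ q') (y : X.D q) :
    X.j hzq' (X.i hqq' y) = X.l hzq hzq' hqq' le_rfl (X.j hzq y) :=
  (X.l_l bot_le bot_le hzq' hqq' le_rfl le_rfl bot_le y).trans
    (X.l_l bot_le hzq hzq' le_rfl bot_le hqq' le_rfl y).symm

lemma l_j_comp {q p q' p' : I} (hqp : q ≤ p) (hq'p' : q' ≤ p') (hpp' : p ≤ p')
    (hqq' : q ≤ q') (y : X.D p) :
    X.l hqp hq'p' hpp' hqq' (X.j hqp y) = X.j hq'p' (X.i hpp' y) :=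
  (X.l_l bot_le hqp hq'p' le_rfl bot_le hpp' hqq' y).trans
    (X.l_l bot_le bot_le hq'p' hpp' le_rfl le_rfl bot_le y).symm

lemma j_j {z z' q : I} (hzq : z ≤ q) (hz'q : z' ≤ q) (hzz' : z ≤ z') (y : X.D q) :
    X.l hzq hz'q le_rfl hzz' (X.j hzq y) = X.j hz'q y :=
  X.l_l bot_le hzq hz'q le_rfl bot_le le_rfl hzz' y

lemma i_k_zero {p q : I} (h : q ≤ p) (x : X.E p q h) : X.i h (X.k h x) = 0 := by
  have hm : X.k h x ∈ (X.k h).range := ⟨x, rfl⟩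
  rw [X.exact_ki] at hm
  exact hm

lemma j_i_zero {p q : I} (h : q ≤ p) (y : X.D q) : X.j h (X.i h y) = 0 := by
  have hm : X.i h y ∈ (X.l (bot_le : (⊥:I) ≤ q) (bot_le : (⊥:I) ≤ p) h le_rfl).range :=
    ⟨y, rfl⟩
  rw [X.exact_ij] at hm
  exact hm

lemma exists_of_j_zero {p q : I} (h : q ≤ p) {y : X.D p} (hy : X.j h y = 0) :
    ∃ t, X.i h t = y := by
  have hm : y ∈ (X.l (bot_le : (⊥:I) ≤ p) h le_rfl bot_le).ker := hy
  rw [← X.exact_ij] at hm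
  exact hm

lemma exists_of_i_zero {p q : I} (h : q ≤ p) {y : X.D q} (hy : X.i h y = 0) :
    ∃ x, X.k h x = y := by
  have hm : y ∈ (X.l (bot_le : (⊥:I) ≤ q) (bot_le : (⊥:I) ≤ p) h le_rfl).ker := hy
  rw [← X.exact_ki] at hm
  exact hm

lemma dd_apply {z q p : I} (hzq : z ≤ q) (hqp : q ≤ p) (x : X.E p q hqp) :
    X.dd hzq hqp x = X.j hzq (X.k hqp x) := rfl

end ExactCoupleSystem

section Lat

namespace ExactCoupleSystem

variable {I : Type u} [Lattice I] [BoundedOrder I] (X : ExactCoupleSystem.{u, v} I)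

lemma exc_bij (hexc : X.IsExcisive) {a w m s : I} (hm : a ⊓ w = m) (hs : a ⊔ w = s)
    (h1 : m ≤ a) (h2 : w ≤ s) (h3 : a ≤ s) (h4 : m ≤ w) :
    Function.Bijective (X.l h1 h2 h3 h4) := by
  subst hm hs
  exact hexc a w

/-- Excision square: `c ⊓ w = z`, `c ⊔ w = p`.  Every element of `D w` killed by
`i : D w → D p` is of the form `i (k m)` for `m : E^c_z`. -/
lemma A2 (hexc : X.IsExcisive) {z w p c : I} (hzw : z ≤ w) (hwp : w ≤ p) (hzc : z ≤ c)
    (hcp : c ≤ p) (hm : c ⊓ w = z) (hj : c ⊔ w = p) {y : X.D w} (hy : X.i hwp y = 0) :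
    ∃ m : X.E c z hzc, X.i hzw (X.k hzc m) = y := by
  obtain ⟨x, hx⟩ := X.exists_of_i_zero hwp hy
  obtain ⟨x', rfl⟩ := (X.exc_bij hexc hm hj hzc hwp hcp hzw).2 x
  exact ⟨x', by rw [← hx, X.k_l hzc hwp hcp hzw x']⟩

lemma C1 (hexc : X.IsExcisive) {z w p c : I} (hzw : z ≤ w) (hwp : w ≤ p) (hzc : z ≤ c)
    (hcp : c ≤ p) (hm : c ⊓ w = z) (hj : c ⊔ w = p) {y : X.D w} (hy : X.i hwp y = 0) :
    ∃ t, X.i hzw t = y := by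
  obtain ⟨m, hm'⟩ := X.A2 hexc hzw hwp hzc hcp hm hj hy
  exact ⟨X.k hzc m, hm'⟩

end ExactCoupleSystem

end Lat
/-- Congruence of "subquotients": equivalent ambient groups with corresponding
kernel subgroups and corresponding relative subgroups give equivalent quotients. -/
def quotCongr {A : Type v} {B : Type v} [AddCommGroup A] [AddCommGroup B] (e : A ≃+ B)
    (K H : AddSubgroup A) (K' H' : AddSubgroup B)
    (hK : ∀ x, x ∈ K ↔ e x ∈ K') (hH : ∀ x, x ∈ K → (x ∈ H ↔ e x ∈ H')) :
    (↥K ⧸ H.addSubgroupOf K) ≃+ (↥K' ⧸ H'.addSubgroupOf K') := by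
  refine QuotientAddGroup.congr _ _
    ({ toFun := fun x => ⟨e x, (hK x).1 x.2⟩
       invFun := fun y => ⟨e.symm y, (hK _).2 (by simpa using y.2)⟩
       left_inv := fun x => Subtype.ext (e.symm_apply_apply x)
       right_inv := fun y => Subtype.ext (e.apply_symm_apply y)
       map_add' := fun x y => Subtype.ext (e.map_add x y) } : ↥K ≃+ ↥K') ?_
  ext y
  simp only [AddSubgroup.mem_map, AddSubgroup.mem_addSubgroupOf]
  constructor
  · rintro ⟨x, hx, rfl⟩
    exact (hH x x.2).1 hx
  · intro hy
    refine ⟨⟨e.symm y, (hK _).2 (by simpa using y.2)⟩, ?_, ?_⟩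
    · exact (hH _ ((hK _).2 (by simpa using y.2))).2 (by simpa using hy)
    · exact Subtype.ext (by simp)

namespace ExactCoupleSystem

variable {I : Type u} [Lattice I] [BoundedOrder I] (X : ExactCoupleSystem.{u, v} I)

/-- Elementary move: change of `z`. -/
def E3iso (hexc : X.IsExcisive) {z z' q p b w c : I}
    (hzq : z ≤ q) (hz'q : z' ≤ q) (hqp : q ≤ p) (hpb : p ≤ b)
    (hzz' : z ≤ z') (hz'w : z' ≤ w) (hwq : w ≤ q) (hzc : z ≤ c) (hcp : c ≤ p)
    (hm : c ⊓ w = z) (hj : c ⊔ w = p) :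
    X.Sterm hzq hqp hpb ≃+ X.Sterm hz'q hqp hpb := by
  have hzw : z ≤ w := hzz'.trans hz'w
  refine quotCongr (AddEquiv.refl _) _ _ _ _ (fun x => ?_) (fun x _ => Iff.rfl)
  simp only [AddEquiv.refl_apply, AddMonoidHom.mem_ker]
  constructor
  · intro h0
    have : X.dd hz'q hqp x = X.l hzq hz'q le_rfl hzz' (X.dd hzq hqp x) :=
      (X.j_j hzq hz'q hzz' (X.k hqp x)).symm
    rw [this, h0, map_zero]
  · intro h0
    obtain ⟨t, ht⟩ := X.exists_of_j_zero hz'q h0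
    have hiwq : X.i hwq (X.i hz'w t) = X.k hqp x := by
      rw [X.i_i hz'w hwq t]; exact ht
    have hu0 : X.i (hwq.trans hqp) (X.i hz'w t) = 0 := by
      rw [← X.i_i hwq hqp, hiwq]; exact X.i_k_zero hqp x
    obtain ⟨s, hs⟩ := X.C1 hexc hzw (hwq.trans hqp) hzc hcp hm hj hu0
    show X.j hzq (X.k hqp x) = 0
    rw [← hiwq, ← hs, X.i_i hzw hwq s]
    exact X.j_i_zero hzq s

end ExactCoupleSystem

namespace ExactCoupleSystem

variable {I : Type u} [Lattice I] [BoundedOrder I] (X : ExactCoupleSystem.{u, v} I)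

/-- Elementary move: change of `b`. -/
def E1iso (hexc : X.IsExcisive) {z q p b b' bb c : I}
    (hzq : z ≤ q) (hqp : q ≤ p) (hpb : p ≤ b) (hpb' : p ≤ b') (hbb' : b ≤ b')
    (hpbb : p ≤ bb) (hbbb : bb ≤ b) (hqc : q ≤ c) (hcb' : c ≤ b')
    (hm : c ⊓ bb = q) (hj : c ⊔ bb = b') :
    X.Sterm hzq hqp hpb ≃+ X.Sterm hzq hqp hpb' := by
  refine quotCongr (AddEquiv.refl _) _ _ _ _ (fun x => Iff.rfl) (fun x _ => ?_)
  simp only [AddEquiv.refl_apply, AddMonoidHom.mem_range]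
  constructor
  · rintro ⟨m, rfl⟩
    refine ⟨X.l hpb hpb' hbb' le_rfl m, ?_⟩
    show X.j hqp (X.k hpb' (X.l hpb hpb' hbb' le_rfl m)) = X.j hqp (X.k hpb m)
    rw [X.k_l_left hpb hpb' hbb' m]
  · rintro ⟨m, hmx⟩
    have h1 : X.i hpb' (X.k hpb' m) = 0 := X.i_k_zero hpb' m
    have h2 : X.i (hbbb.trans hbb') (X.i hpbb (X.k hpb' m)) = 0 := by
      rw [X.i_i hpbb (hbbb.trans hbb')]; exact h1
    obtain ⟨v, hv⟩ := X.C1 hexc (hqp.trans hpbb) (hbbb.trans hbb') hqc hcb' hm hj h2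
    have h3 : X.i hpbb (X.k hpb' m - X.i hqp v) = 0 := by
      rw [map_sub, X.i_i hqp hpbb v, hv, sub_self]
    obtain ⟨m₂, hm₂⟩ := X.exists_of_i_zero hpbb h3
    refine ⟨X.l hpbb hpb hbbb le_rfl m₂, ?_⟩
    show X.j hqp (X.k hpb (X.l hpbb hpb hbbb le_rfl m₂)) = x
    rw [X.k_l_left hpbb hpb hbbb m₂, hm₂, map_sub, X.j_i_zero hqp v, sub_zero]
    exact hmx

/-- Elementary move: simultaneous change of `(q, p)` along an excisive square. -/
noncomputable def E2iso (hexc : X.IsExcisive) {z q p b q' p' w w₀ c₂ bb bb' c₃ : I}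
    (hzq : z ≤ q) (hqp : q ≤ p) (hpb : p ≤ b)
    (hqq' : q ≤ q') (hq'p' : q' ≤ p') (hpp' : p ≤ p') (hp'b : p' ≤ b)
    (hzq' : z ≤ q')
    (hmq : p ⊓ q' = q) (hjp : p ⊔ q' = p')
    (hzw₀ : z ≤ w₀) (hw₀q : w₀ ≤ q) (hw₀w : w₀ ≤ w) (hwq' : w ≤ q')
    (hm1 : q ⊓ w = w₀) (hj1 : q ⊔ w = q')
    (hzc₂ : z ≤ c₂) (hc₂p : c₂ ≤ p) (hm2 : c₂ ⊓ w₀ = z) (hj2 : c₂ ⊔ w₀ = p)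
    (hpbb : p ≤ bb) (hp'bb' : p' ≤ bb') (hbb'b : bb' ≤ b)
    (hq'c₃ : q' ≤ c₃) (hc₃b : c₃ ≤ b) (hm3 : c₃ ⊓ bb' = q') (hj3 : c₃ ⊔ bb' = b)
    (hbbbb' : bb ≤ bb') (hm4 : bb ⊓ p' = p) (hj4 : bb ⊔ p' = bb') :
    X.Sterm hzq hqp hpb ≃+ X.Sterm hzq' hq'p' hp'b := by
  have hbij : Function.Bijective (X.l hqp hq'p' hpp' hqq') :=
    X.exc_bij hexc hmq hjp hqp hq'p' hpp' hqq'
  have keyd : ∀ x : X.E p q hqp, X.dd hzq' hq'p' (X.l hqp hq'p' hpp' hqq' x) =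
      X.l hzq hzq' hqq' le_rfl (X.dd hzq hqp x) := by
    intro x
    show X.j hzq' (X.k hq'p' (X.l hqp hq'p' hpp' hqq' x)) = _
    rw [X.k_l hqp hq'p' hpp' hqq' x, X.j_i_comp hzq hzq' hqq' (X.k hqp x)]
    rfl
  have hLdd : ∀ m : X.E b p hpb, X.l hqp hq'p' hpp' hqq' (X.dd hqp hpb m) =
      X.dd hq'p' hp'b (X.l hpb hp'b le_rfl hpp' m) := by
    intro m
    show X.l hqp hq'p' hpp' hqq' (X.j hqp (X.k hpb m)) =
      X.j hq'p' (X.k hp'b (X.l hpb hp'b le_rfl hpp' m))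
    rw [X.k_l hpb hp'b le_rfl hpp' m, X.l_j_comp hqp hq'p' hpp' hqq' (X.k hpb m)]
  refine quotCongr (AddEquiv.ofBijective (X.l hqp hq'p' hpp' hqq') hbij) _ _ _ _
    (fun x => ?_) (fun x hx => ?_)
  · -- kernels correspond
    simp only [AddMonoidHom.mem_ker, AddEquiv.ofBijective_apply]
    constructor
    · intro h0
      rw [keyd x, h0, map_zero]
    · intro h0
      rw [keyd x] at h0
      have hinj : Function.Injective (X.l hw₀q hwq' hqq' hw₀w) :=
        (X.exc_bij hexc hm1 hj1 hw₀q hwq' hqq' hw₀w).1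
      have hm₀ : X.l hzq hw₀q le_rfl hzw₀ (X.dd hzq hqp x) = 0 := by
        apply hinj
        rw [map_zero, X.l_l hzq hw₀q hwq' le_rfl hzw₀ hqq' hw₀w,
          ← X.l_l hzq hzq' hwq' hqq' le_rfl le_rfl (hzw₀.trans hw₀w), h0, map_zero]
      have hj0 : X.j hw₀q (X.k hqp x) = 0 := by
        rw [← hm₀, dd_apply, X.j_j hzq hw₀q hzw₀]
      obtain ⟨u, hu⟩ := X.exists_of_j_zero hw₀q hj0
      have hiu : X.i (hw₀q.trans hqp) u = 0 := by
        rw [← X.i_i hw₀q hqp u, hu]; exact X.i_k_zero hqp x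
      obtain ⟨t, ht⟩ := X.C1 hexc hzw₀ (hw₀q.trans hqp) hzc₂ hc₂p hm2 hj2 hiu
      show X.j hzq (X.k hqp x) = 0
      rw [← hu, ← ht, X.i_i hzw₀ hw₀q t]
      exact X.j_i_zero hzq t
  · -- relative subgroups correspond
    simp only [AddMonoidHom.mem_range, AddEquiv.ofBijective_apply]
    constructor
    · rintro ⟨m, rfl⟩
      exact ⟨X.l hpb hp'b le_rfl hpp' m, (hLdd m).symm⟩
    · rintro ⟨m', hm'⟩
      have h1 : X.i hp'b (X.k hp'b m') = 0 := X.i_k_zero hp'b m'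
      have h2 : X.i hbb'b (X.i hp'bb' (X.k hp'b m')) = 0 := by
        rw [X.i_i hp'bb' hbb'b]; exact h1
      obtain ⟨v, hv⟩ := X.C1 hexc (hq'p'.trans hp'bb') hbb'b hq'c₃ hc₃b hm3 hj3 h2
      have h3 : X.i hp'bb' (X.k hp'b m' - X.i hq'p' v) = 0 := by
        rw [map_sub, X.i_i hq'p' hp'bb' v, hv, sub_self]
      obtain ⟨m₂, hm₂⟩ := X.A2 hexc hpp' hp'bb' hpbb hbbbb' hm4 hj4 h3
      refine ⟨X.l hpbb hpb (hbbbb'.trans hbb'b) le_rfl m₂, ?_⟩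
      apply hbij.1
      rw [hLdd, ← hm']
      show X.j hq'p' (X.k hp'b (X.l hpb hp'b le_rfl hpp'
          (X.l hpbb hpb (hbbbb'.trans hbb'b) le_rfl m₂))) = X.j hq'p' (X.k hp'b m')
      rw [X.l_l hpbb hpb hp'b (hbbbb'.trans hbb'b) le_rfl le_rfl hpp',
        X.k_l hpbb hp'b ((hbbbb'.trans hbb'b).trans le_rfl) (le_rfl.trans hpp') m₂]
      rw [show X.i (le_rfl.trans hpp') (X.k hpbb m₂) = X.k hp'b m' - X.i hq'p' v from hm₂,
        map_sub, X.j_i_zero hq'p' v, sub_zero]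

end ExactCoupleSystem

----------------------------------------------------------------------
-- combinatorial toolkit
----------------------------------------------------------------------


section Comb

variable {J : Type u} [PartialOrder J]

lemma StepIn.symm' {A : Set J} {a b : J} (h : StepIn A a b) : StepIn A b a :=
  ⟨h.2.1, h.1, h.2.2.symm⟩

lemma stepIn_mono {A A' : Set J} (h : A ⊆ A') {a b : J} (hs : StepIn A a b) :
    StepIn A' a b := ⟨h hs.1, h hs.2.1, hs.2.2⟩

lemma reach_mono {A A' : Set J} (h : A ⊆ A') {a b : J} (hr : ReachIn A a b) :
    ReachIn A' a b :=
  Relation.ReflTransGen.mono (fun _ _ hs => stepIn_mono h hs) a b hr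

lemma reach_closed {A S : Set J} (hS : ∀ u v, StepIn A u v → v ∈ S → u ∈ S) {x y : J}
    (h : ReachIn A x y) (hy : y ∈ S) : x ∈ S := by
  induction h using Relation.ReflTransGen.head_induction_on with
  | refl => exact hy
  | head h' _ ih => exact hS _ _ h' ih

lemma reach_shrink {A : Set J} {x y : J} (h : ReachIn A x y) :
    ReachIn {u | u ∈ A ∧ ReachIn A u y} x y := by
  induction h using Relation.ReflTransGen.head_induction_on with
  | refl => exact .refl
  | @head a c h' hr ih => exact .head ⟨⟨h'.1, .head h' hr⟩, ⟨h'.2.1, hr⟩, h'.2.2⟩ ih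

lemma Zset_subset {z q p b : Set J} : Zset z q p b ⊆ p \ z := fun _ hx => hx.1

lemma Bset_subset {z q p b : Set J} : Bset z q p b ⊆ b \ q := fun _ hx => hx.1

lemma Zset_step {z q p b : Set J} {u v : J} (h : StepIn (p \ z) u v)
    (hv : v ∈ Zset z q p b) : u ∈ Zset z q p b := by
  obtain ⟨hv1, y, hy, hr⟩ := hv
  exact ⟨h.1, y, hy, .head h hr⟩

lemma Bset_step {z q p b : Set J} {u v : J} (h : StepIn (b \ q) u v)
    (hv : v ∈ Bset z q p b) : u ∈ Bset z q p b := by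
  obtain ⟨hv1, y, hy, hr⟩ := hv
  exact ⟨h.1, y, hy, .head h hr⟩

lemma diff_subset_Zset {z q p b : Set J} (hzq : z ⊆ q) : p \ q ⊆ Zset z q p b :=
  fun x hx => ⟨⟨hx.1, fun hz => hx.2 (hzq hz)⟩, x, hx, .refl⟩

lemma diff_subset_Bset {z q p b : Set J} (hpb : p ⊆ b) : p \ q ⊆ Bset z q p b :=
  fun x hx => ⟨⟨hpb hx.1, hx.2⟩, x, hx, .refl⟩

lemma Zset_inter_Bset {z q p b : Set J} (hzq : z ⊆ q) (hpb : p ⊆ b) :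
    Zset z q p b ∩ Bset z q p b = p \ q := by
  apply Set.Subset.antisymm
  · rintro x ⟨⟨⟨hxp, _⟩, _⟩, ⟨⟨_, hxq⟩, _⟩⟩
    exact ⟨hxp, hxq⟩
  · intro x hx
    exact ⟨diff_subset_Zset hzq hx, diff_subset_Bset hpb hx⟩

lemma Bset_z_irrel {z z' q p b : Set J} : Zset z q p b = Zset z q p ∅ := rfl

/-- `z ∪ S` is a lower set when `S ⊆ p∖z` is step-closed in `p∖z`. -/
lemma isLowerSet_union_shield {z p : LowerSet J} {S : Set J}
    (hS1 : S ⊆ (p : Set J) \ z)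
    (hS2 : ∀ u v, StepIn ((p : Set J) \ z) u v → v ∈ S → u ∈ S) :
    IsLowerSet ((z : Set J) ∪ S) := by
  intro a b hba ha
  rcases ha with hz | hS
  · exact Or.inl (z.lower hba hz)
  · have hbp : b ∈ (p : Set J) := p.lower hba (hS1 hS).1
    by_cases hbz : b ∈ (z : Set J)
    · exact Or.inl hbz
    · exact Or.inr (hS2 b a ⟨⟨hbp, hbz⟩, hS1 hS, Or.inl hba⟩ hS)

/-- `p ∖ S` is a lower set when `S ⊆ p∖z` is step-closed in `p∖z`. -/
lemma isLowerSet_diff_shield {z p : LowerSet J} {S : Set J}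
    (hS1 : S ⊆ (p : Set J) \ z)
    (hS2 : ∀ u v, StepIn ((p : Set J) \ z) u v → v ∈ S → u ∈ S) :
    IsLowerSet ((p : Set J) \ S) := by
  rintro a b hba ⟨hap, haS⟩
  refine ⟨p.lower hba hap, fun hbS => ?_⟩
  by_cases haz : a ∈ (z : Set J)
  · exact (hS1 hbS).2 (z.lower hba haz)
  · exact haS (hS2 a b ⟨⟨hap, haz⟩, hS1 hbS, Or.inr hba⟩ hbS)

end Comb

----------------------------------------------------------------------
-- assembly: the monotone case
----------------------------------------------------------------------

namespace ExactCoupleSystem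

lemma mono_case {J : Type u} [PartialOrder J] (X : ExactCoupleSystem.{u, v} (LowerSet J))
    (hexc : X.IsExcisive) {z q p b z₁ q₁ p₁ b₁ : LowerSet J}
    (hzq : z ≤ q) (hqp : q ≤ p) (hpb : p ≤ b)
    (hzq₁ : z₁ ≤ q₁) (hqp₁ : q₁ ≤ p₁) (hpb₁ : p₁ ≤ b₁)
    (hz : z ≤ z₁) (hq : q ≤ q₁) (hp : p ≤ p₁) (hb : b ≤ b₁)
    (hZ : Zset (z : Set J) ↑q ↑p ↑b = Zset (z₁ : Set J) ↑q₁ ↑p₁ ↑b₁)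
    (hB : Bset (z : Set J) ↑q ↑p ↑b = Bset (z₁ : Set J) ↑q₁ ↑p₁ ↑b₁) :
    Nonempty (X.Sterm hzq hqp hpb ≃+ X.Sterm hzq₁ hqp₁ hpb₁) := by
  classical
  set ZS := Zset (z : Set J) ↑q ↑p ↑b with hZSdef
  set BS := Bset (z : Set J) ↑q ↑p ↑b with hBSdef
  -- coercion inclusions
  have czq : (z : Set J) ⊆ ↑q := fun _ h => hzq h
  have cqp : (q : Set J) ⊆ ↑p := fun _ h => hqp h
  have cpb : (p : Set J) ⊆ ↑b := fun _ h => hpb h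
  have czq₁ : (z₁ : Set J) ⊆ ↑q₁ := fun _ h => hzq₁ h
  have cqp₁ : (q₁ : Set J) ⊆ ↑p₁ := fun _ h => hqp₁ h
  have cpb₁ : (p₁ : Set J) ⊆ ↑b₁ := fun _ h => hpb₁ h
  have czz₁ : (z : Set J) ⊆ ↑z₁ := fun _ h => hz h
  have cqq₁ : (q : Set J) ⊆ ↑q₁ := fun _ h => hq h
  have cpp₁ : (p : Set J) ⊆ ↑p₁ := fun _ h => hp h
  have cbb₁ : (b : Set J) ⊆ ↑b₁ := fun _ h => hb h
  -- Δ is preserved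
  have hΔ : (↑p : Set J) \ ↑q = (↑p₁ : Set J) \ ↑q₁ := by
    rw [← Zset_inter_Bset czq cpb, ← Zset_inter_Bset czq₁ cpb₁, ← hZSdef, ← hBSdef, hZ, hB]
  -- B is unchanged when only b grows
  have hB1 : Bset (z : Set J) ↑q ↑p ↑b₁ = BS := by
    apply Set.Subset.antisymm
    · intro x hx
      obtain ⟨hxb, y, hy, hr⟩ := hx
      refine reach_closed (fun u v hst hv => ?_) hr (diff_subset_Bset cpb hy)
      by_cases huq₁ : u ∈ (↑q₁ : Set J)
      · rcases hst.2.2 with hle | hge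
        · have hub : u ∈ (↑b : Set J) := b.lower hle (Bset_subset hv).1
          exact Bset_step ⟨⟨hub, hst.1.2⟩, Bset_subset hv, Or.inl hle⟩ hv
        · have hv₁ : v ∈ Bset (↑z₁ : Set J) ↑q₁ ↑p₁ ↑b₁ := by rw [← hB]; exact hv
          exact absurd (q₁.lower hge huq₁) (Bset_subset hv₁).2
      · have hv₁ : v ∈ Bset (↑z₁ : Set J) ↑q₁ ↑p₁ ↑b₁ := by rw [← hB]; exact hv
        have hu₁ := Bset_step ⟨⟨hst.1.1, huq₁⟩, Bset_subset hv₁, hst.2.2⟩ hv₁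
        show u ∈ BS
        rw [hB]; exact hu₁
    · intro x hx
      obtain ⟨⟨hxb, hxq⟩, y, hy, hr⟩ := hx
      have hmono : (↑b : Set J) \ ↑q ⊆ (↑b₁ : Set J) \ ↑q := fun t ht => ⟨cbb₁ ht.1, ht.2⟩
      exact ⟨⟨cbb₁ hxb, hxq⟩, y, hy, reach_mono hmono hr⟩
  -- the (q,p) excisive square
  have hpq₁ : (↑p : Set J) ∩ ↑q₁ = ↑q := by
    apply Set.Subset.antisymm
    · rintro x ⟨hxp, hxq₁⟩
      by_contra hxq
      have : x ∈ (↑p₁ : Set J) \ ↑q₁ := by rw [← hΔ]; exact ⟨hxp, hxq⟩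
      exact this.2 hxq₁
    · intro x hx
      exact ⟨cqp hx, cqq₁ hx⟩
  have hpq₁' : (↑p : Set J) ∪ ↑q₁ = ↑p₁ := by
    apply Set.Subset.antisymm
    · rintro x (hx | hx)
      · exact cpp₁ hx
      · exact cqp₁ hx
    · intro x hx
      by_cases hxq₁ : x ∈ (↑q₁ : Set J)
      · exact Or.inr hxq₁
      · have : x ∈ (↑p : Set J) \ ↑q := by rw [hΔ]; exact ⟨hx, hxq₁⟩
        exact Or.inl this.1
  have hmq : p ⊓ q₁ = q := SetLike.coe_injective hpq₁
  have hjp : p ⊔ q₁ = p₁ := SetLike.coe_injective hpq₁'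
  -- Z is unchanged under moving (z,q,p,·) to (z,q₁,p₁,·)
  have hZ3 : Zset (z : Set J) ↑q₁ ↑p₁ ↑b₁ = ZS := by
    apply Set.Subset.antisymm
    · intro x hx
      obtain ⟨hxpz, y, hy, hr⟩ := hx
      have hyΔ : y ∈ (↑p : Set J) \ ↑q := by rw [hΔ]; exact hy
      refine reach_closed (fun u v hst hv => ?_) hr (diff_subset_Zset czq hyΔ)
      by_cases hup : u ∈ (↑p : Set J)
      · exact Zset_step ⟨⟨hup, hst.1.2⟩, Zset_subset hv, hst.2.2⟩ hv
      · by_cases huz₁ : u ∈ (↑z₁ : Set J)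
        · rcases hst.2.2 with hle | hge
          · exact absurd (p.lower hle (Zset_subset hv).1) hup
          · have hv₁ : v ∈ Zset (↑z₁ : Set J) ↑q₁ ↑p₁ ↑b₁ := by rw [← hZ]; exact hv
            exact absurd (z₁.lower hge huz₁) (Zset_subset hv₁).2
        · have hv₁ : v ∈ Zset (↑z₁ : Set J) ↑q₁ ↑p₁ ↑b₁ := by rw [← hZ]; exact hv
          have hu₁ := Zset_step ⟨⟨hst.1.1, huz₁⟩, Zset_subset hv₁, hst.2.2⟩ hv₁
          show u ∈ ZS
          rw [hZ]; exact hu₁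
    · intro x hx
      obtain ⟨⟨hxp, hxz⟩, y, hy, hr⟩ := hx
      have hy₁ : y ∈ (↑p₁ : Set J) \ ↑q₁ := by rw [← hΔ]; exact hy
      have hmono : (↑p : Set J) \ ↑z ⊆ (↑p₁ : Set J) \ ↑z := fun t ht => ⟨cpp₁ ht.1, ht.2⟩
      exact ⟨⟨cpp₁ hxp, hxz⟩, y, hy₁, reach_mono hmono hr⟩
  have hB4 : Bset (z : Set J) ↑q₁ ↑p₁ ↑b₁ = BS := by
    show Bset (↑z₁ : Set J) ↑q₁ ↑p₁ ↑b₁ = BS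
    rw [hB]
  -- basic facts about ZS and BS
  have fZ1 : ZS ⊆ (↑p : Set J) \ ↑z := Zset_subset
  have fZp₁ : ZS ⊆ (↑p₁ : Set J) \ ↑z := by rw [← hZ3]; exact Zset_subset
  have fZstep₁ : ∀ u v, StepIn ((↑p₁ : Set J) \ ↑z) u v → v ∈ ZS → u ∈ ZS := by
    intro u v hst hv
    rw [← hZ3] at hv ⊢
    exact Zset_step hst hv
  have fZΔ : (↑p : Set J) \ ↑q ⊆ ZS := diff_subset_Zset czq
  have fZΔ₁ : (↑p₁ : Set J) \ ↑q₁ ⊆ ZS := by rw [← hΔ]; exact fZΔ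
  have fZq₁ : ∀ x, x ∈ ZS → x ∈ (↑q₁ : Set J) → x ∈ (↑q : Set J) := by
    intro x hx h1
    rw [← hpq₁]; exact ⟨(fZ1 hx).1, h1⟩
  have fZz₁ : ∀ x, x ∈ ZS → x ∉ (↑z₁ : Set J) := by
    intro x hx
    have hx₁ : x ∈ Zset (↑z₁ : Set J) ↑q₁ ↑p₁ ↑b₁ := by rw [← hZ]; exact hx
    exact (Zset_subset hx₁).2
  have fB1 : BS ⊆ (↑b₁ : Set J) \ ↑q := by rw [← hB1]; exact Bset_subset
  have fBstep : ∀ u v, StepIn ((↑b₁ : Set J) \ ↑q) u v → v ∈ BS → u ∈ BS := by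
    intro u v hst hv
    rw [← hB1] at hv ⊢
    exact Bset_step hst hv
  have fB2 : BS ⊆ (↑b₁ : Set J) \ ↑q₁ := by rw [← hB4]; exact Bset_subset
  have fBstep₁ : ∀ u v, StepIn ((↑b₁ : Set J) \ ↑q₁) u v → v ∈ BS → u ∈ BS := by
    intro u v hst hv
    rw [← hB4] at hv ⊢
    exact Bset_step hst hv
  have fBΔ : (↑p : Set J) \ ↑q ⊆ BS := diff_subset_Bset cpb
  have fBb : BS ⊆ (↑b : Set J) := fun x hx => (Bset_subset hx).1
  -- lower sets
  let W : LowerSet J := ⟨(↑p₁ : Set J) \ ZS, isLowerSet_diff_shield fZp₁ fZstep₁⟩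
  have mono_pz : (↑p : Set J) \ ↑z ⊆ (↑p₁ : Set J) \ ↑z := fun t ht => ⟨cpp₁ ht.1, ht.2⟩
  -- more lower sets
  have hC2S1 : ZS ∩ (↑p : Set J) ⊆ (↑p : Set J) \ ↑z := fun x hx => ⟨hx.2, (fZ1 hx.1).2⟩
  have hC2S2 : ∀ u v, StepIn ((↑p : Set J) \ ↑z) u v → v ∈ ZS ∩ ↑p → u ∈ ZS ∩ ↑p :=
    fun u v hst hv => ⟨fZstep₁ u v (stepIn_mono mono_pz hst) hv.1, hst.1.1⟩
  let C2 : LowerSet J := ⟨(↑z : Set J) ∪ (ZS ∩ ↑p), isLowerSet_union_shield hC2S1 hC2S2⟩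
  let CZ : LowerSet J := ⟨(↑z : Set J) ∪ ZS, isLowerSet_union_shield fZp₁ fZstep₁⟩
  let BB : LowerSet J := ⟨(↑q : Set J) ∪ BS, isLowerSet_union_shield fB1 fBstep⟩
  let BB' : LowerSet J := ⟨(↑q₁ : Set J) ∪ BS, isLowerSet_union_shield fB2 fBstep₁⟩
  have hC3S2 : ∀ u v, StepIn ((↑b₁ : Set J) \ ↑q₁) u v →
      v ∈ ((↑b₁ : Set J) \ ↑q₁) \ BS → u ∈ ((↑b₁ : Set J) \ ↑q₁) \ BS :=
    fun u v hst hv => ⟨hst.1, fun huB => hv.2 (fBstep₁ v u hst.symm' huB)⟩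
  let C3 : LowerSet J := ⟨(↑q₁ : Set J) ∪ (((↑b₁ : Set J) \ ↑q₁) \ BS),
    isLowerSet_union_shield (fun _ hx => hx.1) hC3S2⟩
  have hCE1S2 : ∀ u v, StepIn ((↑b₁ : Set J) \ ↑q) u v →
      v ∈ ((↑b₁ : Set J) \ ↑q) \ BS → u ∈ ((↑b₁ : Set J) \ ↑q) \ BS :=
    fun u v hst hv => ⟨hst.1, fun huB => hv.2 (fBstep v u hst.symm' huB)⟩
  let CE1 : LowerSet J := ⟨(↑q : Set J) ∪ (((↑b₁ : Set J) \ ↑q) \ BS),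
    isLowerSet_union_shield (fun _ hx => hx.1) hCE1S2⟩
  -- frequently used inclusions
  have hpb₁' : p ≤ b₁ := hpb.trans hb
  have hqb₁ : (↑q : Set J) ⊆ ↑b₁ := fun x hx => cbb₁ (cpb (cqp hx))
  have hq₁b₁ : (↑q₁ : Set J) ⊆ ↑b₁ := fun x hx => cpb₁ (cqp₁ hx)
  have hBSb₁ : BS ⊆ (↑b₁ : Set J) := fun x hx => (fB1 hx).1
  have hzW : (↑z : Set J) ⊆ (↑p₁ : Set J) \ ZS :=
    fun x hx => ⟨cpp₁ (cqp (czq hx)), fun hZx => (fZ1 hZx).2 hx⟩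
  have hz₁W : (↑z₁ : Set J) ⊆ (↑p₁ : Set J) \ ZS :=
    fun x hx => ⟨cqp₁ (czq₁ hx), fun hZx => fZz₁ x hZx hx⟩
  have hWq₁ : (↑p₁ : Set J) \ ZS ⊆ ↑q₁ := by
    intro x hx
    by_contra h
    exact hx.2 (fZΔ₁ ⟨hx.1, h⟩)
  have hpBB : (↑p : Set J) ⊆ ↑q ∪ BS := by
    intro x hx
    by_cases hxq : x ∈ (↑q : Set J)
    · exact Or.inl hxq
    · exact Or.inr (fBΔ ⟨hx, hxq⟩)
  have hp₁BB' : (↑p₁ : Set J) ⊆ ↑q₁ ∪ BS := by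
    intro x hx
    by_cases hxq : x ∈ (↑q₁ : Set J)
    · exact Or.inl hxq
    · exact Or.inr (fZΔ₁ ⟨hx, hxq⟩ |> fun _ => fBΔ (by rw [hΔ]; exact ⟨hx, hxq⟩))
  -- set identities for the lattice squares
  have hsetE1m : ((↑q : Set J) ∪ (((↑b₁ : Set J) \ ↑q) \ BS)) ∩ ((↑q : Set J) ∪ BS) = ↑q := by
    ext x
    constructor
    · rintro ⟨h1 | h1, h2 | h2⟩
      · exact h1
      · exact h1
      · exact h2
      · exact absurd h2 h1.2
    · intro hx
      exact ⟨Or.inl hx, Or.inl hx⟩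
  have hsetE1j : ((↑q : Set J) ∪ (((↑b₁ : Set J) \ ↑q) \ BS)) ∪ ((↑q : Set J) ∪ BS) = ↑b₁ := by
    ext x
    constructor
    · rintro ((h | h) | (h | h))
      · exact hqb₁ h
      · exact h.1.1
      · exact hqb₁ h
      · exact hBSb₁ h
    · intro hx
      by_cases hxq : x ∈ (↑q : Set J)
      · exact Or.inl (Or.inl hxq)
      · by_cases hxB : x ∈ BS
        · exact Or.inr (Or.inr hxB)
        · exact Or.inl (Or.inr ⟨⟨hx, hxq⟩, hxB⟩)
  have hsetj1 : (↑q : Set J) ∪ ((↑p₁ : Set J) \ ZS) = ↑q₁ := by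
    ext x
    constructor
    · rintro (h | h)
      · exact cqq₁ h
      · exact hWq₁ h
    · intro hx
      by_cases hxq : x ∈ (↑q : Set J)
      · exact Or.inl hxq
      · refine Or.inr ⟨cqp₁ hx, fun hZx => hxq (fZq₁ x hZx hx)⟩
  have hsetm2 : ((↑z : Set J) ∪ (ZS ∩ ↑p)) ∩ ((↑q : Set J) ∩ ((↑p₁ : Set J) \ ZS)) = ↑z := by
    ext x
    constructor
    · rintro ⟨h1 | h1, h2, h3⟩
      · exact h1
      · exact absurd h1.1 h3.2
    · intro hx
      exact ⟨Or.inl hx, czq hx, hzW hx⟩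
  have hsetj2 : ((↑z : Set J) ∪ (ZS ∩ ↑p)) ∪ ((↑q : Set J) ∩ ((↑p₁ : Set J) \ ZS)) = ↑p := by
    ext x
    constructor
    · rintro ((h | h) | h)
      · exact cqp (czq h)
      · exact h.2
      · exact cqp h.1
    · intro hx
      by_cases hxZ : x ∈ ZS
      · exact Or.inl (Or.inr ⟨hxZ, hx⟩)
      · have hxq : x ∈ (↑q : Set J) := by
          by_contra h
          exact hxZ (fZΔ ⟨hx, h⟩)
        exact Or.inr ⟨hxq, cpp₁ hx, hxZ⟩
  have hsetm3 : ((↑q₁ : Set J) ∪ (((↑b₁ : Set J) \ ↑q₁) \ BS)) ∩ ((↑q₁ : Set J) ∪ BS) = ↑q₁ := by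
    ext x
    constructor
    · rintro ⟨h1 | h1, h2 | h2⟩
      · exact h1
      · exact h1
      · exact h2
      · exact absurd h2 h1.2
    · intro hx
      exact ⟨Or.inl hx, Or.inl hx⟩
  have hsetj3 : ((↑q₁ : Set J) ∪ (((↑b₁ : Set J) \ ↑q₁) \ BS)) ∪ ((↑q₁ : Set J) ∪ BS) = ↑b₁ := by
    ext x
    constructor
    · rintro ((h | h) | (h | h))
      · exact hq₁b₁ h
      · exact h.1.1
      · exact hq₁b₁ h
      · exact hBSb₁ h
    · intro hx
      by_cases hxq : x ∈ (↑q₁ : Set J)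
      · exact Or.inl (Or.inl hxq)
      · by_cases hxB : x ∈ BS
        · exact Or.inr (Or.inr hxB)
        · exact Or.inl (Or.inr ⟨⟨hx, hxq⟩, hxB⟩)
  have hsetm4 : ((↑q : Set J) ∪ BS) ∩ (↑p₁ : Set J) = ↑p := by
    ext x
    constructor
    · rintro ⟨h1 | h1, h2⟩
      · exact cqp h1
      · have : x ∈ (↑p : Set J) \ ↑q := by
          rw [hΔ]
          exact ⟨h2, (fB2 h1).2⟩
        exact this.1
    · intro hx
      exact ⟨hpBB hx, cpp₁ hx⟩
  have hsetj4 : ((↑q : Set J) ∪ BS) ∪ (↑p₁ : Set J) = (↑q₁ : Set J) ∪ BS := by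
    ext x
    constructor
    · rintro ((h | h) | h)
      · exact Or.inl (cqq₁ h)
      · exact Or.inr h
      · exact hp₁BB' h
    · rintro (h | h)
      · exact Or.inr (cqp₁ h)
      · exact Or.inl (Or.inr h)
  have hsetmZ : ((↑z : Set J) ∪ ZS) ∩ ((↑p₁ : Set J) \ ZS) = ↑z := by
    ext x
    constructor
    · rintro ⟨h1 | h1, h2⟩
      · exact h1
      · exact absurd h1 h2.2
    · intro hx
      exact ⟨Or.inl hx, hzW hx⟩
  have hsetjZ : ((↑z : Set J) ∪ ZS) ∪ ((↑p₁ : Set J) \ ZS) = ↑p₁ := by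
    ext x
    constructor
    · rintro ((h | h) | h)
      · exact cpp₁ (cqp (czq h))
      · exact (fZp₁ h).1
      · exact h.1
    · intro hx
      by_cases hxZ : x ∈ ZS
      · exact Or.inl (Or.inr hxZ)
      · exact Or.inr ⟨hx, hxZ⟩
  -- step 1 : grow b to b₁
  have e1 : X.Sterm hzq hqp hpb ≃+ X.Sterm hzq hqp hpb₁' :=
    X.E1iso hexc hzq hqp hpb hpb₁' hb
      (show p ≤ BB from hpBB)
      (show BB ≤ b from fun x hx => hx.elim (fun h => cpb (cqp h)) (fun h => fBb h))
      (show q ≤ CE1 from fun x hx => Or.inl hx)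
      (show CE1 ≤ b₁ from fun x hx => hx.elim (fun h => hqb₁ h) (fun h => h.1.1))
      (SetLike.coe_injective hsetE1m) (SetLike.coe_injective hsetE1j)
  -- step 2 : move (q,p) to (q₁,p₁) across the excisive square
  have e2 : X.Sterm hzq hqp hpb₁' ≃+ X.Sterm (hzq.trans hq) hqp₁ hpb₁ :=
    X.E2iso hexc hzq hqp hpb₁' hq hqp₁ hp hpb₁ (hzq.trans hq) hmq hjp
      (show z ≤ q ⊓ W from le_inf hzq (show z ≤ W from hzW))
      inf_le_left inf_le_right (show W ≤ q₁ from hWq₁)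
      rfl (SetLike.coe_injective hsetj1)
      (show z ≤ C2 from fun x hx => Or.inl hx)
      (show C2 ≤ p from fun x hx => hx.elim (fun h => cqp (czq h)) (fun h => h.2))
      (SetLike.coe_injective hsetm2) (SetLike.coe_injective hsetj2)
      (show p ≤ BB from hpBB) (show p₁ ≤ BB' from hp₁BB')
      (show BB' ≤ b₁ from fun x hx => hx.elim (fun h => hq₁b₁ h) (fun h => hBSb₁ h))
      (show q₁ ≤ C3 from fun x hx => Or.inl hx)
      (show C3 ≤ b₁ from fun x hx => hx.elim (fun h => hq₁b₁ h) (fun h => h.1.1))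
      (SetLike.coe_injective hsetm3) (SetLike.coe_injective hsetj3)
      (show BB ≤ BB' from fun x hx => hx.elim (fun h => Or.inl (cqq₁ h)) (fun h => Or.inr h))
      (SetLike.coe_injective hsetm4) (SetLike.coe_injective hsetj4)
  -- step 3 : grow z to z₁
  have e3 : X.Sterm (hzq.trans hq) hqp₁ hpb₁ ≃+ X.Sterm hzq₁ hqp₁ hpb₁ :=
    X.E3iso hexc (hzq.trans hq) hzq₁ hqp₁ hpb₁ hz
      (show z₁ ≤ W from hz₁W) (show W ≤ q₁ from hWq₁)
      (show z ≤ CZ from fun x hx => Or.inl hx)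
      (show CZ ≤ p₁ from fun x hx => hx.elim (fun h => cpp₁ (cqp (czq h))) (fun h => (fZp₁ h).1))
      (SetLike.coe_injective hsetmZ) (SetLike.coe_injective hsetjZ)
  exact ⟨(e1.trans e2).trans e3⟩

end ExactCoupleSystem

----------------------------------------------------------------------
-- the theorem
----------------------------------------------------------------------

theorem statement19' {J : Type u} [PartialOrder J]
    (X : ExactCoupleSystem.{u, v} (LowerSet J)) (hexc : X.IsExcisive)
    {z q p b z' q' p' b' : LowerSet J}
    (hzq : z ≤ q) (hqp : q ≤ p) (hpb : p ≤ b)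
    (hzq' : z' ≤ q') (hqp' : q' ≤ p') (hpb' : p' ≤ b')
    (hZ : Zset (z : Set J) ↑q ↑p ↑b = Zset (z' : Set J) ↑q' ↑p' ↑b')
    (hB : Bset (z : Set J) ↑q ↑p ↑b = Bset (z' : Set J) ↑q' ↑p' ↑b') :
    Nonempty (X.Sterm hzq hqp hpb ≃+ X.Sterm hzq' hqp' hpb') := by
  classical
  have czq : (z : Set J) ⊆ ↑q := fun _ h => hzq h
  have cqp : (q : Set J) ⊆ ↑p := fun _ h => hqp h
  have cpb : (p : Set J) ⊆ ↑b := fun _ h => hpb h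
  have czq' : (z' : Set J) ⊆ ↑q' := fun _ h => hzq' h
  have cqp' : (q' : Set J) ⊆ ↑p' := fun _ h => hqp' h
  have cpb' : (p' : Set J) ⊆ ↑b' := fun _ h => hpb' h
  have hΔ : (↑p : Set J) \ ↑q = (↑p' : Set J) \ ↑q' := by
    rw [← Zset_inter_Bset czq cpb, ← Zset_inter_Bset czq' cpb', hZ, hB]
  have hΔ₂ : ((↑(p ⊔ p') : Set J)) \ ↑(q ⊔ q') = (↑p : Set J) \ ↑q := by
    show ((↑p : Set J) ∪ ↑p') \ ((↑q : Set J) ∪ ↑q') = (↑p : Set J) \ ↑q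
    ext x
    constructor
    · rintro ⟨h1 | h1, h2⟩
      · exact ⟨h1, fun h => h2 (Or.inl h)⟩
      · rw [hΔ]
        exact ⟨h1, fun h => h2 (Or.inr h)⟩
    · intro hx
      have hx' : x ∈ (↑p' : Set J) \ ↑q' := by rw [← hΔ]; exact hx
      exact ⟨Or.inl hx.1, fun h => h.elim hx.2 hx'.2⟩
  -- Z of the join quadruple
  have hZJ : Zset (↑(z ⊔ z') : Set J) ↑(q ⊔ q') ↑(p ⊔ p') ↑(b ⊔ b') =
      Zset (z : Set J) ↑q ↑p ↑b := by
    apply Set.Subset.antisymm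
    · intro x hx
      obtain ⟨hx1, y, hy, hr⟩ := hx
      have hy' : y ∈ (↑p : Set J) \ ↑q := by rw [← hΔ₂]; exact hy
      refine reach_closed (fun u v hst hv => ?_) hr (diff_subset_Zset czq hy')
      have hu1 : u ∈ (↑p : Set J) ∪ ↑p' := hst.1.1
      have hu2 : u ∉ (↑z : Set J) ∪ ↑z' := hst.1.2
      rcases hu1 with hup | hup'
      · exact Zset_step ⟨⟨hup, fun h => hu2 (Or.inl h)⟩, Zset_subset hv, hst.2.2⟩ hv
      · have hv' : v ∈ Zset (↑z' : Set J) ↑q' ↑p' ↑b' := by rw [← hZ]; exact hv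
        have := Zset_step ⟨⟨hup', fun h => hu2 (Or.inr h)⟩, Zset_subset hv', hst.2.2⟩ hv'
        rw [hZ]; exact this
    · intro x hx
      obtain ⟨⟨hxp, hxz⟩, y, hy, hr⟩ := hx
      have hxZ : x ∈ Zset (z : Set J) ↑q ↑p ↑b := ⟨⟨hxp, hxz⟩, y, hy, hr⟩
      have hxZ' : x ∈ Zset (z' : Set J) ↑q' ↑p' ↑b' := by rw [← hZ]; exact hxZ
      have hT : {u | u ∈ (↑p : Set J) \ ↑z ∧ ReachIn ((↑p : Set J) \ ↑z) u y} ⊆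
          ((↑(p ⊔ p') : Set J)) \ ↑(z ⊔ z') := by
        intro t ht
        have htZ : t ∈ Zset (z : Set J) ↑q ↑p ↑b := ⟨ht.1, y, hy, ht.2⟩
        have htZ' : t ∈ Zset (z' : Set J) ↑q' ↑p' ↑b' := by rw [← hZ]; exact htZ
        exact ⟨Or.inl ht.1.1, fun h => h.elim ht.1.2 (Zset_subset htZ').2⟩
      refine ⟨⟨Or.inl hxp, fun h => h.elim hxz (Zset_subset hxZ').2⟩, y, ?_,
        reach_mono hT (reach_shrink hr)⟩
      show y ∈ ((↑(p ⊔ p') : Set J)) \ ↑(q ⊔ q')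
      rw [hΔ₂]; exact hy
  -- B of the join quadruple
  have hBJ : Bset (↑(z ⊔ z') : Set J) ↑(q ⊔ q') ↑(p ⊔ p') ↑(b ⊔ b') =
      Bset (z : Set J) ↑q ↑p ↑b := by
    apply Set.Subset.antisymm
    · intro x hx
      obtain ⟨hx1, y, hy, hr⟩ := hx
      have hy' : y ∈ (↑p : Set J) \ ↑q := by rw [← hΔ₂]; exact hy
      refine reach_closed (fun u v hst hv => ?_) hr (diff_subset_Bset cpb hy')
      have hu1 : u ∈ (↑b : Set J) ∪ ↑b' := hst.1.1
      have hu2 : u ∉ (↑q : Set J) ∪ ↑q' := hst.1.2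
      rcases hu1 with hub | hub'
      · exact Bset_step ⟨⟨hub, fun h => hu2 (Or.inl h)⟩, Bset_subset hv, hst.2.2⟩ hv
      · have hv' : v ∈ Bset (↑z' : Set J) ↑q' ↑p' ↑b' := by rw [← hB]; exact hv
        have := Bset_step ⟨⟨hub', fun h => hu2 (Or.inr h)⟩, Bset_subset hv', hst.2.2⟩ hv'
        rw [hB]; exact this
    · intro x hx
      obtain ⟨⟨hxb, hxq⟩, y, hy, hr⟩ := hx
      have hxB : x ∈ Bset (z : Set J) ↑q ↑p ↑b := ⟨⟨hxb, hxq⟩, y, hy, hr⟩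
      have hxB' : x ∈ Bset (z' : Set J) ↑q' ↑p' ↑b' := by rw [← hB]; exact hxB
      have hT : {u | u ∈ (↑b : Set J) \ ↑q ∧ ReachIn ((↑b : Set J) \ ↑q) u y} ⊆
          ((↑(b ⊔ b') : Set J)) \ ↑(q ⊔ q') := by
        intro t ht
        have htB : t ∈ Bset (z : Set J) ↑q ↑p ↑b := ⟨ht.1, y, hy, ht.2⟩
        have htB' : t ∈ Bset (z' : Set J) ↑q' ↑p' ↑b' := by rw [← hB]; exact htB
        exact ⟨Or.inl ht.1.1, fun h => h.elim ht.1.2 (Bset_subset htB').2⟩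
      refine ⟨⟨Or.inl hxb, fun h => h.elim hxq (Bset_subset hxB').2⟩, y, ?_,
        reach_mono hT (reach_shrink hr)⟩
      show y ∈ ((↑(p ⊔ p') : Set J)) \ ↑(q ⊔ q')
      rw [hΔ₂]; exact hy
  obtain ⟨f⟩ := ExactCoupleSystem.mono_case X hexc hzq hqp hpb
    (sup_le_sup hzq hzq') (sup_le_sup hqp hqp') (sup_le_sup hpb hpb')
    le_sup_left le_sup_left le_sup_left le_sup_left hZJ.symm hBJ.symm
  obtain ⟨g⟩ := ExactCoupleSystem.mono_case X hexc hzq' hqp' hpb'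
    (sup_le_sup hzq hzq') (sup_le_sup hqp hqp') (sup_le_sup hpb hpb')
    le_sup_right le_sup_right le_sup_right le_sup_right
    (hZ.symm.trans hZJ.symm) (hB.symm.trans hBJ.symm)
  exact ⟨f.trans g.symm⟩

/-- Natural isomorphisms 2: for an excisive exact couple system over the
lattice of downsets `D(J)` of a poset `J`, two quadruples of downsets `z ⊆ q ⊆ p ⊆ b` and
`z' ⊆ q' ⊆ p' ⊆ b'` with `Z(z,q,p,b) = Z(z',q',p',b')` and `B(z,q,p,b) = B(z',q',p',b')`
have isomorphic S-terms. -/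
theorem statement19 {J : Type u} [PartialOrder J]
    (X : ExactCoupleSystem.{u, v} (LowerSet J)) (hexc : X.IsExcisive)
    {z q p b z' q' p' b' : LowerSet J}
    (hzq : z ≤ q) (hqp : q ≤ p) (hpb : p ≤ b)
    (hzq' : z' ≤ q') (hqp' : q' ≤ p') (hpb' : p' ≤ b')
    (hZ : Zset (z : Set J) ↑q ↑p ↑b = Zset (z' : Set J) ↑q' ↑p' ↑b')
    (hB : Bset (z : Set J) ↑q ↑p ↑b = Bset (z' : Set J) ↑q' ↑p' ↑b') :
    Nonempty (X.Sterm hzq hqp hpb ≃+ X.Sterm hzq' hqp' hpb') :=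
  statement19' X hexc hzq hqp hpb hzq' hqp' hpb' hZ hB
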